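/- Let F have characteristic 2 and b, c ∈ F[x] with 0 ≤ deg c < 2 deg b. Then the equation ω² + bω + c = 0 has a solution ω in the Laurent series field F((1/x)). -/

import Mathlib

open Polynomial

/-- The image of a polynomial in F((1/x)): evaluate at x = X⁻¹, where the
variable x corresponds to the Laurent series `single (-1) 1` of degree 1. -/
noncomputable def polyToLaurentInv (F : Type) [Field F] (p : Polynomial F) :
    LaurentSeries F :=
  Polynomial.aeval (HahnSeries.single (-1 : ℤ) (1 : F)) p


section Adic

variable (F : Type) [Field F]

open PowerSeries in
lemma mem_span_X_pow_smul_top (k : ℕ) (f : PowerSeries F) :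
    f ∈ ((Ideal.span {(X : PowerSeries F)}) ^ k • ⊤ : Submodule (PowerSeries F) (PowerSeries F))
      ↔ (X : PowerSeries F) ^ k ∣ f := by
  rw [smul_eq_mul, Ideal.mul_top, Ideal.span_singleton_pow, Ideal.mem_span_singleton]

open PowerSeries in
instance powerSeries_adic_complete :
    IsAdicComplete (Ideal.span {(X : PowerSeries F)}) (PowerSeries F) where
  haus' := by
    intro x hx
    ext n
    have := hx (n + 1)
    rw [SModEq.sub_mem, sub_zero, mem_span_X_pow_smul_top, PowerSeries.X_pow_dvd_iff] at this
    simpa using this n (by omega)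
  prec' := by
    intro f hf
    refine ⟨PowerSeries.mk fun k => PowerSeries.coeff k (f (k + 1)), fun n => ?_⟩
    rw [SModEq.sub_mem, mem_span_X_pow_smul_top, PowerSeries.X_pow_dvd_iff]
    intro k hk
    have h := hf (show k + 1 ≤ n by omega)
    rw [SModEq.sub_mem, mem_span_X_pow_smul_top, PowerSeries.X_pow_dvd_iff] at h
    have h2 := h k (by omega)
    simp only [map_sub] at h2 ⊢
    rw [PowerSeries.coeff_mk]
    rw [sub_eq_zero] at h2 ⊢
    exact h2.symm

/-- Artin–Schreier-type equation via Hensel's lemma in `F⟦X⟧`. -/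
lemma exists_tau (u : PowerSeries F) (hu : (PowerSeries.X : PowerSeries F) ∣ u) :
    ∃ τ : PowerSeries F, τ ^ 2 + τ + u = 0 := by
  have H : HenselianRing (PowerSeries F) (Ideal.span {(PowerSeries.X : PowerSeries F)}) :=
    inferInstance
  have hmonic : (X ^ 2 + X + C u : Polynomial (PowerSeries F)).Monic := by
    rw [add_assoc]
    refine monic_X_pow_add ?_
    refine lt_of_le_of_lt (degree_add_le _ _) ?_
    rw [degree_X]
    exact max_lt (by norm_num) (lt_of_le_of_lt degree_C_le (by norm_num))
  have heval : (X ^ 2 + X + C u : Polynomial (PowerSeries F)).eval 0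
      ∈ Ideal.span {(PowerSeries.X : PowerSeries F)} := by
    simpa using Ideal.mem_span_singleton.mpr hu
  have hderiv : IsUnit (Ideal.Quotient.mk (Ideal.span {(PowerSeries.X : PowerSeries F)})
      ((X ^ 2 + X + C u : Polynomial (PowerSeries F)).derivative.eval 0)) := by
    have h1 : ((X ^ 2 + X + C u : Polynomial (PowerSeries F)).derivative.eval 0) = 1 := by
      simp [derivative_X_pow]
    rw [h1, map_one]
    exact isUnit_one
  obtain ⟨a, ha, -⟩ := H.is_henselian (X ^ 2 + X + C u) hmonic 0 heval hderiv
  refine ⟨a, ?_⟩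
  simpa [IsRoot, eval_add, eval_pow, eval_X, eval_C] using ha

end Adic

lemma glue (F : Type) [Field F] (p : Polynomial F) (m : ℕ) (h : p.natDegree ≤ m) :
    ∃ q : PowerSeries F, PowerSeries.constantCoeff q = p.coeff m ∧
      HahnSeries.ofPowerSeries ℤ F q
        = polyToLaurentInv F p * HahnSeries.single (m : ℤ) 1 := by
  refine ⟨∑ i ∈ Finset.range (m + 1),
      PowerSeries.C (p.coeff i) * (PowerSeries.X : PowerSeries F) ^ (m - i), ?_, ?_⟩
  · rw [map_sum, Finset.sum_eq_single m]
    · simp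
    · intro i hi hne
      have hmi : m - i ≠ 0 := by simp only [Finset.mem_range] at hi; omega
      simp [map_mul, map_pow, zero_pow hmi]
    · intro hm; exact absurd (Finset.self_mem_range_succ m) hm
  · rw [polyToLaurentInv, Polynomial.aeval_eq_sum_range' (Nat.lt_succ_of_le h), Finset.sum_mul,
      map_sum]
    refine Finset.sum_congr rfl fun i hi => ?_
    simp only [Finset.mem_range] at hi
    rw [map_mul, HahnSeries.ofPowerSeries_C, map_pow, HahnSeries.ofPowerSeries_X,
      HahnSeries.single_pow, one_pow, HahnSeries.single_pow, one_pow]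
    conv_rhs => rw [Algebra.smul_def, HahnSeries.algebraMap_apply', PowerSeries.algebraMap_apply,
      Algebra.algebraMap_self, RingHom.id_apply, HahnSeries.ofPowerSeries_C,
      mul_assoc, HahnSeries.single_mul_single, mul_one]
    congr 1
    simp only [nsmul_eq_mul, smul_eq_mul, mul_one, mul_neg]
    rw [show ((m - i : ℕ) : ℤ) = -(i : ℤ) + (m : ℤ) by omega]

/-- char F = 2, 0 ≤ deg c < 2 deg b: ω² + bω + c = 0 has a solution in the
Laurent series field F((1/x)) (the real case). -/
theorem laurent_root_exists_real_case
    (F : Type) [Field F] [CharP F 2] (b c : Polynomial F)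
    (hc : c ≠ 0) (hdeg : c.natDegree < 2 * b.natDegree) :
    ∃ ω : LaurentSeries F,
      ω ^ 2 + polyToLaurentInv F b * ω + polyToLaurentInv F c = 0 := by
  classical
  set n := b.natDegree with hn
  have hb0 : b ≠ 0 := by
    intro h
    have h0 : n = 0 := by rw [hn, h, natDegree_zero]
    omega
  obtain ⟨bq, hbq0, hbqe⟩ := glue F b n le_rfl
  obtain ⟨cq, hcq0, hcqe⟩ := glue F c (2 * n) (le_of_lt hdeg)
  have hbu : PowerSeries.constantCoeff bq ≠ 0 := by
    rw [hbq0, coeff_natDegree]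
    exact leadingCoeff_ne_zero.mpr hb0
  set U : Fˣ := Units.mk0 _ hbu with hU
  set v := PowerSeries.invOfUnit bq U with hvdef
  have hv : bq * v = 1 := PowerSeries.mul_invOfUnit bq U rfl
  have hX : (PowerSeries.X : PowerSeries F) ∣ cq * v ^ 2 := by
    rw [PowerSeries.X_dvd_iff, map_mul, hcq0, coeff_eq_zero_of_natDegree_lt hdeg, zero_mul]
  obtain ⟨τ, hτ⟩ := exists_tau F (cq * v ^ 2) hX
  refine ⟨polyToLaurentInv F b * HahnSeries.ofPowerSeries ℤ F τ, ?_⟩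
  have hss : (HahnSeries.single (n : ℤ) (1 : F)) * (HahnSeries.single (n : ℤ) (1 : F))
      = HahnSeries.single ((2 * n : ℕ) : ℤ) (1 : F) := by
    rw [HahnSeries.single_mul_single, mul_one]
    congr 1
    push_cast
    ring
  have hs0 : (HahnSeries.single (n : ℤ) (1 : F)) ≠ 0 := HahnSeries.single_ne_zero one_ne_zero
  have hz : bq * bq * (τ * τ) + bq * bq * τ + cq = 0 := by
    linear_combination (bq * bq) * hτ - cq * (bq * v + 1) * hv
  have key : ((polyToLaurentInv F b * HahnSeries.ofPowerSeries ℤ F τ) ^ 2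
        + polyToLaurentInv F b * (polyToLaurentInv F b * HahnSeries.ofPowerSeries ℤ F τ)
        + polyToLaurentInv F c)
      * ((HahnSeries.single (n : ℤ) (1 : F)) * (HahnSeries.single (n : ℤ) (1 : F))) = 0 := by
    have e1 : ((polyToLaurentInv F b * HahnSeries.ofPowerSeries ℤ F τ) ^ 2
        + polyToLaurentInv F b * (polyToLaurentInv F b * HahnSeries.ofPowerSeries ℤ F τ)
        + polyToLaurentInv F c)
      * ((HahnSeries.single (n : ℤ) (1 : F)) * (HahnSeries.single (n : ℤ) (1 : F)))
        = (polyToLaurentInv F b * HahnSeries.single (n : ℤ) (1 : F))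
            * (polyToLaurentInv F b * HahnSeries.single (n : ℤ) (1 : F))
            * (HahnSeries.ofPowerSeries ℤ F τ * HahnSeries.ofPowerSeries ℤ F τ)
          + (polyToLaurentInv F b * HahnSeries.single (n : ℤ) (1 : F))
            * (polyToLaurentInv F b * HahnSeries.single (n : ℤ) (1 : F))
            * HahnSeries.ofPowerSeries ℤ F τ
          + polyToLaurentInv F c
            * ((HahnSeries.single (n : ℤ) (1 : F)) * (HahnSeries.single (n : ℤ) (1 : F))) := by
      ring
    rw [e1, ← hbqe, hss, ← hcqe, ← map_mul, ← map_mul, ← map_mul, ← map_mul, ← map_add, ← map_add,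
      hz, map_zero]
  rcases mul_eq_zero.mp key with h | h
  · exact h
  · exact absurd h (mul_ne_zero hs0 hs0)
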